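/- Suppose x ~ N(0, Σ) in ℝ^p with σ_max(Σ) ≤ C_X/p, suppose ‖β*‖₂ ≤ ξ √p, and suppose that conditionally on x, y follows a Poisson distribution with mean μ = log(1 + e^{xᵀβ*}). Then there exists a numerical constant C* > 0 such that for every m ≥ 1, E[y^m] ≤ (C* m)^m e^{m² C_X ξ² / 2}. -/

import Mathlib

open MeasureTheory ProbabilityTheory
open scoped RealInnerProductSpace ENNReal NNReal

lemma aux_gauss (c : ℝ) (v : ℝ≥0) :
    ∫⁻ x, ENNReal.ofReal (Real.exp (c * x)) ∂(gaussianReal 0 v)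
      = ENNReal.ofReal (Real.exp (c ^ 2 * v / 2)) := by
  by_cases hv : v = 0
  · subst hv
    simp [gaussianReal_zero_var, lintegral_dirac]
  · have hv' : (0:ℝ) < (v:ℝ) := by positivity
    rw [gaussianReal_of_var_ne_zero _ hv,
      lintegral_withDensity_eq_lintegral_mul _ (measurable_gaussianPDF _ _)
        (by fun_prop)]
    have key : ∀ x : ℝ, gaussianPDF 0 v x * ENNReal.ofReal (Real.exp (c * x))
        = ENNReal.ofReal (Real.exp (c ^ 2 * v / 2)) * gaussianPDF (c * v) v x := by
      intro x
      rw [gaussianPDF, gaussianPDF, ← ENNReal.ofReal_mul (gaussianPDFReal_nonneg _ _ _),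
        ← ENNReal.ofReal_mul (Real.exp_nonneg _)]
      congr 1
      unfold gaussianPDFReal
      rw [mul_assoc, ← Real.exp_add]
      have hexp : -(x - 0) ^ 2 / (2 * (v:ℝ)) + c * x
          = c ^ 2 * (v:ℝ) / 2 + -(x - c * (v:ℝ)) ^ 2 / (2 * (v:ℝ)) := by
        field_simp
        ring
      rw [hexp, Real.exp_add]
      ring
    simp_rw [Pi.mul_apply, key]
    rw [lintegral_const_mul _ (measurable_gaussianPDF _ _),
      lintegral_gaussianPDF_eq_one _ hv, mul_one]

lemma aux_poisson (r : ℝ≥0) (c : ℝ) :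
    ∫⁻ k : ℕ, ENNReal.ofReal (Real.exp (c * k)) ∂(poissonMeasure r)
      = ENNReal.ofReal (Real.exp (r * (Real.exp c - 1))) := by
  rw [lintegral_countable']
  have hsing : ∀ k : ℕ, poissonMeasure r {k} = ENNReal.ofReal (poissonPMFReal r k) := by
    intro k
    rw [poissonMeasure_singleton]
    rfl
  simp_rw [hsing, ← ENNReal.ofReal_mul (Real.exp_nonneg _)]
  have hfun : ∀ k : ℕ, Real.exp (c * k) * poissonPMFReal r k
      = Real.exp (-(r:ℝ)) * ((r * Real.exp c) ^ k / (Nat.factorial k)) := by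
    intro k
    unfold poissonPMFReal
    rw [mul_comm c (k:ℝ), Real.exp_nat_mul, mul_pow]
    ring
  simp_rw [hfun]
  rw [← ENNReal.ofReal_tsum_of_nonneg (fun k => by positivity)
      (((Real.summable_pow_div_factorial _).mul_left _))]
  congr 1
  rw [tsum_mul_left]
  have h : ∑' k : ℕ, ((r:ℝ) * Real.exp c) ^ k / (Nat.factorial k)
      = Real.exp (r * Real.exp c) := by
    have h := (NormedSpace.expSeries_div_hasSum_exp ((r:ℝ) * Real.exp c)).tsum_eq
    rw [← Real.exp_eq_exp_ℝ] at h
    exact h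
  rw [h, ← Real.exp_add]
  ring_nf

lemma aux_pow_le (m k : ℕ) (hm : 1 ≤ m) :
    (k : ℝ) ^ m ≤ ((m : ℝ) / Real.log 2) ^ m * Real.exp (Real.log (1 + m) * k) := by
  have hm0 : (0:ℝ) < m := by exact_mod_cast hm
  have hlog2 : (0:ℝ) < Real.log 2 := Real.log_pos (by norm_num)
  set θ := Real.log (1 + (m:ℝ)) with hθdef
  have hlog2θ : Real.log 2 ≤ θ := by
    apply Real.log_le_log (by norm_num)
    have : (1:ℝ) ≤ m := by exact_mod_cast hm
    linarith
  have hθ : 0 < θ := lt_of_lt_of_le hlog2 hlog2θ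
  rcases Nat.eq_zero_or_pos k with hk | hk
  · subst hk
    simp only [Nat.cast_zero]
    rw [zero_pow (by omega)]
    positivity
  · have hk' : (0:ℝ) < k := by exact_mod_cast hk
    have h1 : (k:ℝ) ≤ ((m:ℝ)/θ) * Real.exp (θ * k / m) := by
      have hx : (0:ℝ) < θ * k / m := by positivity
      have hlog := Real.log_le_sub_one_of_pos hx
      have h2 : θ * k / m ≤ Real.exp (θ * k / m) := by
        calc θ * k / m = Real.exp (Real.log (θ * k / m)) := (Real.exp_log hx).symm
        _ ≤ Real.exp (θ * k / m) := Real.exp_le_exp.mpr (by linarith)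
      calc (k:ℝ) = ((m:ℝ)/θ) * (θ * k / m) := by field_simp
      _ ≤ ((m:ℝ)/θ) * Real.exp (θ * k / m) :=
          mul_le_mul_of_nonneg_left h2 (by positivity)
    have h3 : (k:ℝ)^m ≤ (((m:ℝ)/θ) * Real.exp (θ * k / m))^m :=
      pow_le_pow_left₀ (by positivity) h1 m
    have h4 : (Real.exp (θ * k / m))^m = Real.exp (θ * k) := by
      rw [← Real.exp_nat_mul]
      congr 1
      field_simp
    rw [mul_pow, h4] at h3
    refine h3.trans ?_
    apply mul_le_mul_of_nonneg_right _ (Real.exp_nonneg _)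
    apply pow_le_pow_left₀ (by positivity)
    exact div_le_div_of_nonneg_left (le_of_lt hm0) hlog2 hlog2θ

theorem poisson_softplus_moment_bound :
    ∃ Cstar : ℝ, 0 < Cstar ∧
      ∀ (p : ℕ), 0 < p →
      ∀ (C_X ξ : ℝ), 0 < C_X → 0 < ξ →
      ∀ (Sig : Matrix (Fin p) (Fin p) ℝ), Sig.PosSemidef →
      (∀ u : EuclideanSpace ℝ (Fin p),
        ⟪u, Matrix.toEuclideanLin Sig u⟫ ≤ C_X / p * ‖u‖ ^ 2) →
      ∀ (βstar : EuclideanSpace ℝ (Fin p)), ‖βstar‖ ≤ ξ * Real.sqrt p →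
      ∀ (ν : Measure (EuclideanSpace ℝ (Fin p))), IsProbabilityMeasure ν →
      (∀ u : EuclideanSpace ℝ (Fin p),
        Measure.map (fun v => ⟪u, v⟫) ν =
          gaussianReal 0 (Real.toNNReal ⟪u, Matrix.toEuclideanLin Sig u⟫)) →
      ∀ m : ℕ, 1 ≤ m →
        ∫⁻ v, ∫⁻ k : ℕ, (k : ℝ≥0∞) ^ m
            ∂(poissonMeasure (Real.toNNReal (Real.log (1 + Real.exp ⟪v, βstar⟫)))) ∂ν ≤
          ENNReal.ofReal ((Cstar * m) ^ m * Real.exp ((m : ℝ) ^ 2 * C_X * ξ ^ 2 / 2)) := by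
  refine ⟨6, by norm_num, ?_⟩
  intro p hp C_X ξ hCX hξ Sig hSig hop βstar hβ ν hν hmap m hm
  have hm0 : (0:ℝ) < m := by exact_mod_cast hm
  have hlog2 : (0:ℝ) < Real.log 2 := Real.log_pos (by norm_num)
  set t : EuclideanSpace ℝ (Fin p) → ℝ := fun v => ⟪βstar, v⟫ with ht
  have hmeas_t : Measurable t := (continuous_const.inner continuous_id).measurable
  set θ := Real.log (1 + (m:ℝ)) with hθdef
  have hexpθ : Real.exp θ = 1 + m := Real.exp_log (by positivity)
  set Cm : ℝ := ((m:ℝ)/Real.log 2)^m * 2^m with hCm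
  have hCm0 : (0:ℝ) ≤ Cm := by positivity
  -- variance bound
  set s : ℝ≥0 := Real.toNNReal ⟪βstar, Matrix.toEuclideanLin Sig βstar⟫ with hs
  have hsle : (s:ℝ) ≤ C_X * ξ^2 := by
    have h1 : ⟪βstar, Matrix.toEuclideanLin Sig βstar⟫ ≤ C_X / p * ‖βstar‖^2 := hop βstar
    have hp' : (0:ℝ) < p := by exact_mod_cast hp
    have h2 : ‖βstar‖^2 ≤ ξ^2 * p := by
      calc ‖βstar‖^2 ≤ (ξ * Real.sqrt p)^2 := pow_le_pow_left₀ (norm_nonneg _) hβ 2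
      _ = ξ^2 * p := by rw [mul_pow, Real.sq_sqrt (le_of_lt hp')]
    have hple : C_X / p * ‖βstar‖^2 ≤ C_X * ξ^2 := by
      calc C_X / p * ‖βstar‖^2 ≤ C_X / p * (ξ^2 * p) :=
            mul_le_mul_of_nonneg_left h2 (by positivity)
      _ = C_X * ξ^2 := by field_simp
    rw [hs, Real.coe_toNNReal']
    exact max_le (h1.trans hple) (by positivity)
  -- inner bound
  have inner_bound : ∀ v : EuclideanSpace ℝ (Fin p),
      ∫⁻ k : ℕ, (k : ℝ≥0∞) ^ m
          ∂(poissonMeasure (Real.toNNReal (Real.log (1 + Real.exp ⟪v, βstar⟫))))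
        ≤ ENNReal.ofReal Cm * ENNReal.ofReal (Real.exp (m * |t v|)) := by
    intro v
    set r : ℝ≥0 := Real.toNNReal (Real.log (1 + Real.exp ⟪v, βstar⟫)) with hr
    have hrle : (r:ℝ) ≤ Real.log 2 + |t v| := by
      have hpos : (0:ℝ) < 1 + Real.exp ⟪v, βstar⟫ := by positivity
      have h0 : (0:ℝ) ≤ Real.log (1 + Real.exp ⟪v, βstar⟫) :=
        Real.log_nonneg (by nlinarith [Real.exp_pos ⟪v, βstar⟫])
      rw [hr, Real.coe_toNNReal _ h0]
      have hvt : ⟪v, βstar⟫ = t v := real_inner_comm _ _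
      have hb : 1 + Real.exp ⟪v, βstar⟫ ≤ 2 * Real.exp |t v| := by
        have h1 : Real.exp ⟪v, βstar⟫ ≤ Real.exp |t v| :=
          Real.exp_le_exp.mpr (by rw [hvt]; exact le_abs_self _)
        have h2 : (1:ℝ) ≤ Real.exp |t v| := Real.one_le_exp (abs_nonneg _)
        linarith
      calc Real.log (1 + Real.exp ⟪v, βstar⟫) ≤ Real.log (2 * Real.exp |t v|) :=
            Real.log_le_log hpos hb
      _ = Real.log 2 + |t v| := by
            rw [Real.log_mul (by norm_num) (Real.exp_ne_zero _), Real.log_exp]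
    calc ∫⁻ k : ℕ, (k : ℝ≥0∞) ^ m ∂(poissonMeasure r)
        ≤ ∫⁻ k : ℕ, ENNReal.ofReal (((m:ℝ)/Real.log 2)^m)
            * ENNReal.ofReal (Real.exp (θ * k)) ∂(poissonMeasure r) := by
          apply lintegral_mono
          intro k
          dsimp only
          have hk : (k : ℝ≥0∞)^m = ENNReal.ofReal ((k:ℝ)^m) := by
            rw [ENNReal.ofReal_pow (by positivity), ENNReal.ofReal_natCast]
          rw [hk, ← ENNReal.ofReal_mul (by positivity)]
          exact ENNReal.ofReal_le_ofReal (aux_pow_le m k hm)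
      _ = ENNReal.ofReal (((m:ℝ)/Real.log 2)^m)
            * ENNReal.ofReal (Real.exp (r * (Real.exp θ - 1))) := by
          rw [lintegral_const_mul _ (.of_discrete), aux_poisson]
      _ ≤ ENNReal.ofReal Cm * ENNReal.ofReal (Real.exp (m * |t v|)) := by
          rw [← ENNReal.ofReal_mul (by positivity), ← ENNReal.ofReal_mul hCm0]
          apply ENNReal.ofReal_le_ofReal
          have hexpb : Real.exp ((r:ℝ) * (Real.exp θ - 1)) ≤ 2^m * Real.exp (m * |t v|) := by
            rw [hexpθ]
            have h2 : (r:ℝ) * (1 + m - 1) ≤ (Real.log 2 + |t v|) * m := by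
              have : (r:ℝ) * (1 + (m:ℝ) - 1) = (r:ℝ) * m := by ring
              rw [this]
              exact mul_le_mul_of_nonneg_right hrle (le_of_lt hm0)
            calc Real.exp ((r:ℝ) * (1 + m - 1)) ≤ Real.exp ((Real.log 2 + |t v|) * m) :=
                  Real.exp_le_exp.mpr h2
            _ = 2^m * Real.exp (m * |t v|) := by
                rw [add_mul, Real.exp_add, mul_comm (Real.log 2) (m:ℝ), Real.exp_nat_mul,
                  Real.exp_log (by norm_num : (0:ℝ) < 2), mul_comm |t v| (m:ℝ)]
          calc ((m:ℝ)/Real.log 2)^m * Real.exp ((r:ℝ) * (Real.exp θ - 1))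
              ≤ ((m:ℝ)/Real.log 2)^m * (2^m * Real.exp (m * |t v|)) :=
                mul_le_mul_of_nonneg_left hexpb (by positivity)
          _ = Cm * Real.exp (m * |t v|) := by rw [hCm]; ring
  -- outer integral via Gaussian MGF
  have key : ∀ c : ℝ, ∫⁻ v, ENNReal.ofReal (Real.exp (c * t v)) ∂ν
      = ENNReal.ofReal (Real.exp (c^2 * s / 2)) := by
    intro c
    rw [← aux_gauss c s, hs, ← hmap βstar]
    exact (lintegral_map (g := t)
      (by fun_prop : Measurable fun x : ℝ => ENNReal.ofReal (Real.exp (c * x))) hmeas_t).symm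
  have E := Real.exp ((m:ℝ)^2 * (s:ℝ) / 2)
  calc ∫⁻ v, ∫⁻ k : ℕ, (k : ℝ≥0∞) ^ m
          ∂(poissonMeasure (Real.toNNReal (Real.log (1 + Real.exp ⟪v, βstar⟫)))) ∂ν
      ≤ ∫⁻ v, ENNReal.ofReal Cm * ENNReal.ofReal (Real.exp (m * |t v|)) ∂ν :=
        lintegral_mono inner_bound
    _ = ENNReal.ofReal Cm * ∫⁻ v, ENNReal.ofReal (Real.exp (m * |t v|)) ∂ν :=
        lintegral_const_mul _ ((hmeas_t.abs.const_mul (m:ℝ)).exp.ennreal_ofReal)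
    _ ≤ ENNReal.ofReal Cm * ∫⁻ v, (ENNReal.ofReal (Real.exp ((m:ℝ) * t v))
          + ENNReal.ofReal (Real.exp (-(m:ℝ) * t v))) ∂ν := by
        apply mul_le_mul_right
        apply lintegral_mono
        intro v
        have hre : Real.exp ((m:ℝ) * |t v|)
            ≤ Real.exp ((m:ℝ) * t v) + Real.exp (-(m:ℝ) * t v) := by
          rcases abs_cases (t v) with ⟨h, _⟩ | ⟨h, _⟩ <;> rw [h] <;>
            [skip; rw [mul_neg, ← neg_mul]] <;>
            nlinarith [Real.exp_pos ((m:ℝ) * t v), Real.exp_pos (-(m:ℝ) * t v)]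
        calc ENNReal.ofReal (Real.exp ((m:ℝ) * |t v|))
            ≤ ENNReal.ofReal (Real.exp ((m:ℝ) * t v) + Real.exp (-(m:ℝ) * t v)) :=
              ENNReal.ofReal_le_ofReal hre
        _ = _ := ENNReal.ofReal_add (Real.exp_nonneg _) (Real.exp_nonneg _)
    _ = ENNReal.ofReal Cm * (ENNReal.ofReal (Real.exp ((m:ℝ)^2 * s / 2))
          + ENNReal.ofReal (Real.exp ((m:ℝ)^2 * s / 2))) := by
        rw [lintegral_add_left ((hmeas_t.const_mul (m:ℝ)).exp.ennreal_ofReal),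
          key ((m:ℝ)), key (-(m:ℝ)), neg_pow, Even.neg_one_pow (by norm_num)]
        ring_nf
    _ ≤ ENNReal.ofReal ((6 * (m:ℝ)) ^ m * Real.exp ((m : ℝ) ^ 2 * C_X * ξ ^ 2 / 2)) := by
        rw [← ENNReal.ofReal_add (Real.exp_nonneg _) (Real.exp_nonneg _),
          ← ENNReal.ofReal_mul hCm0]
        apply ENNReal.ofReal_le_ofReal
        have hEle : Real.exp ((m:ℝ)^2 * s / 2) ≤ Real.exp ((m:ℝ)^2 * C_X * ξ^2 / 2) := by
          apply Real.exp_le_exp.mpr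
          have h := mul_le_mul_of_nonneg_left hsle (by positivity : (0:ℝ) ≤ (m:ℝ)^2)
          nlinarith
        have hconst : 2 * Cm ≤ (6 * (m:ℝ))^m := by
          have hlog23 : (2:ℝ)/3 ≤ Real.log 2 := by
            have := Real.log_two_gt_d9
            linarith
          have hCm2 : Cm = (2 * (m:ℝ) / Real.log 2)^m := by
            rw [hCm, ← mul_pow]
            congr 1
            field_simp
          have hd : 2 * (m:ℝ) / Real.log 2 ≤ 3 * m := by
            rw [div_le_iff₀ hlog2]
            nlinarith
          have h1 : Cm ≤ (3 * (m:ℝ))^m := by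
            rw [hCm2]
            exact pow_le_pow_left₀ (by positivity) hd m
          have h2 : (2:ℝ) ≤ 2^m := by
            calc (2:ℝ) = 2^1 := (pow_one 2).symm
            _ ≤ 2^m := pow_le_pow_right₀ one_le_two hm
          calc 2 * Cm ≤ 2^m * (3 * (m:ℝ))^m := by
                apply mul_le_mul h2 h1 hCm0 (by positivity)
          _ = (6 * (m:ℝ))^m := by rw [← mul_pow]; ring_nf
        calc Cm * (Real.exp ((m:ℝ)^2 * s / 2) + Real.exp ((m:ℝ)^2 * s / 2))
            = 2 * Cm * Real.exp ((m:ℝ)^2 * s / 2) := by ring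
        _ ≤ (6 * (m:ℝ))^m * Real.exp ((m:ℝ)^2 * C_X * ξ^2 / 2) := by
            apply mul_le_mul hconst hEle (Real.exp_nonneg _) (by positivity)
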